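/- Let f be a large-scale dim-control function such that f(x) > x for all sufficiently large x. Then there exists a large-scale dim-control function g such that for every n ∈ ℕ, g(x) > fⁿ(x) (the n-fold composition of f) for all sufficiently large x. -/

import Mathlib

open Filter Set Metric Topology
open scoped NNReal ENNReal

/-- A large-scale (asymptotic) dim-control function: continuous, increasing,
eventually at least the identity, tending to infinity. -/
def IsLSControl (f : ℝ≥0 → ℝ≥0) : Prop :=
  Continuous f ∧ Monotone f ∧ (∀ᶠ x in atTop, x ≤ f x) ∧ Tendsto f atTop atTop

/-- Asymptotically linear: coincides with a linear function on a neighborhood of infinity. -/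
def IsAsympLinear (f : ℝ≥0 → ℝ≥0) : Prop :=
  ∃ a b : ℝ≥0, ∀ᶠ x in atTop, f x = a * x + b

/-- A (large-scale) control semigroup. -/
def IsControlSemigroup (S : Set (ℝ≥0 → ℝ≥0)) : Prop :=
  (∀ f ∈ S, IsLSControl f) ∧
  (∀ f, IsLSControl f → IsAsympLinear f → f ∈ S) ∧
  (∀ f ∈ S, ∀ g ∈ S, f ∘ g ∈ S)

/-- A family of subsets is `s`-disjoint if distinct members are at distance `> s`. -/
def SDisjoint {X : Type*} [MetricSpace X] (s : ℝ≥0) (𝒰 : Set (Set X)) : Prop :=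
  ∀ U ∈ 𝒰, ∀ V ∈ 𝒰, U ≠ V → ∀ x ∈ U, ∀ y ∈ V, (s : ℝ) < dist x y

/-- A family of subsets is `D`-bounded if each member has diameter at most `D`. -/
def BoundedBy {X : Type*} [MetricSpace X] (D : ℝ≥0) (𝒰 : Set (Set X)) : Prop :=
  ∀ U ∈ 𝒰, EMetric.diam U ≤ (D : ℝ≥0∞)

/-- `asdim_S X ≤ n`. -/
def ASDimLE (S : Set (ℝ≥0 → ℝ≥0)) (X : Type*) [MetricSpace X] (n : ℕ) : Prop :=
  ∃ f ∈ S, ∃ s₀ : ℝ≥0, ∀ s : ℝ≥0, s₀ ≤ s →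
    ∃ 𝒰 : Fin (n + 1) → Set (Set X),
      (⋃ i, ⋃₀ 𝒰 i) = univ ∧ ∀ i, SDisjoint s (𝒰 i) ∧ BoundedBy (f s) (𝒰 i)

/-- The `S`-controlled asymptotic dimension, as an element of `ℕ∞`. -/
noncomputable def ASDim (S : Set (ℝ≥0 → ℝ≥0)) (X : Type*) [MetricSpace X] : ℕ∞ :=
  sInf {k : ℕ∞ | ∃ n : ℕ, k = n ∧ ASDimLE S X n}

/-- `S₁ ⪯ S₂` : `S₂` is finer than `S₁`. -/
def Preceq (S₁ S₂ : Set (ℝ≥0 → ℝ≥0)) : Prop :=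
  ∀ f ∈ S₂, ∃ g ∈ S₁, ∀ᶠ x in atTop, f x ≤ g x

lemma key_interp (a a' b b' t t' : ℝ≥0) (hA : a ≤ a') (hB : b ≤ b') (hab : a ≤ b)
    (hab' : a' ≤ b') (ht : t ≤ t') (ht' : t' ≤ 1) :
    a + t * (b - a) ≤ a' + t' * (b' - a') := by
  have h1 : a + t * (b - a) ≤ a + t' * (b - a) := by gcongr
  refine h1.trans ?_
  rw [← NNReal.coe_le_coe]
  push_cast [NNReal.coe_sub hab, NNReal.coe_sub hab']
  have c1 : (0:ℝ) ≤ 1 - (t':ℝ) := by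
    have := NNReal.coe_le_coe.2 ht'; push_cast at this; linarith
  have c2 : (a:ℝ) ≤ a' := hA
  have c3 : (b:ℝ) ≤ b' := hB
  have c4 : (0:ℝ) ≤ (t':ℝ) := t'.coe_nonneg
  nlinarith [mul_nonneg c1 (sub_nonneg.2 c2), mul_nonneg c4 (sub_nonneg.2 c3)]

/-- If a large-scale dim-control function is strictly bigger than the identity near
infinity, then some large-scale dim-control function eventually dominates all of
its iterates. -/
theorem exists_dominating_all_iterates (f : ℝ≥0 → ℝ≥0) (hf : IsLSControl f)
    (hgt : ∀ᶠ x in atTop, x < f x) :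
    ∃ g : ℝ≥0 → ℝ≥0, IsLSControl g ∧ ∀ n : ℕ, ∀ᶠ x in atTop, f^[n] x < g x := by
  obtain ⟨hc, hm, -, -⟩ := hf
  set F : ℝ≥0 → ℝ≥0 := fun x => f x + x + 1 with hFdef
  have hFc : Continuous F := by fun_prop
  have hFm : Monotone F := fun a b h => by
    simp only [hFdef]; exact add_le_add (add_le_add (hm h) h) le_rfl
  have hFgt : ∀ x, x < F x := fun x => by
    simp only [hFdef]
    calc x < x + 1 := lt_add_one x
    _ ≤ f x + x + 1 := by gcongr; exact le_add_self
  have hFle : ∀ x, f x ≤ F x := fun x => by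
    simp only [hFdef]; exact le_add_of_le_of_nonneg (le_add_of_le_of_nonneg le_rfl (zero_le : 0 ≤ x)) zero_le_one
  have hFnc : ∀ n, Continuous (F^[n]) := fun n => hFc.iterate n
  have hFnm : ∀ n, Monotone (F^[n]) := fun n => hFm.iterate n
  have hiter : ∀ x, Monotone fun n => F^[n] x := fun x =>
    monotone_nat_of_le_succ fun n => by
      rw [Function.iterate_succ_apply']; exact (hFgt _).le
  have hxle : ∀ n x, x ≤ F^[n] x := fun n x => by
    simpa using hiter x (Nat.zero_le n)
  have hfF : ∀ n x, f^[n] x ≤ F^[n] x := by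
    intro n
    induction n with
    | zero => simp
    | succ k ih =>
      intro x
      rw [Function.iterate_succ_apply', Function.iterate_succ_apply']
      exact ((hm (ih x)).trans (hFle _))
  have hdom : ∀ n x, f^[n] x < F^[n+1] x := fun n x => by
    rw [Function.iterate_succ_apply']
    exact lt_of_lt_of_le (hFgt _) (hFm (hfF n x))
  -- the interpolated dominating function
  set P : ℕ → ℝ≥0 → ℝ≥0 := fun n x => F^[n] x + (x - n) * (F^[n+1] x - F^[n] x) with hPdef
  set g : ℝ≥0 → ℝ≥0 := fun x => P ⌊x⌋₊ x with hgdef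
  have hPc : ∀ n, Continuous (P n) := fun n => by
    simp only [hPdef]
    exact (hFnc n).add (((continuous_id.sub continuous_const).mul
      ((hFnc (n+1)).sub (hFnc n))))
  have hAB : ∀ n x, F^[n] x ≤ F^[n+1] x := fun n x => hiter x (Nat.le_succ n)
  have hPlow : ∀ n x, F^[n] x ≤ P n x := fun n x => self_le_add_right _ _
  have hPhigh : ∀ (n : ℕ) (x : ℝ≥0), x ≤ (n:ℝ≥0) + 1 → P n x ≤ F^[n+1] x := by
    intro n x hx
    have ht : x - (n:ℝ≥0) ≤ 1 := tsub_le_iff_right.2 (by rwa [add_comm])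
    calc P n x ≤ F^[n] x + 1 * (F^[n+1] x - F^[n] x) := by simp only [hPdef]; gcongr
    _ = F^[n+1] x := by rw [one_mul, add_tsub_cancel_of_le (hAB n x)]
  have hglow : ∀ x, F^[⌊x⌋₊] x ≤ g x := fun x => hPlow _ x
  have hgx : ∀ x, x ≤ g x := fun x => (hxle _ x).trans (hglow x)
  have hghigh : ∀ x, g x ≤ F^[⌊x⌋₊+1] x := fun x =>
    hPhigh _ x (Nat.lt_floor_add_one x).le
  -- g agrees with P n on Icc n (n+1)
  have hEq : ∀ n : ℕ, ∀ x ∈ Icc (n:ℝ≥0) ((n:ℝ≥0)+1), g x = P n x := by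
    intro n x hx
    rcases eq_or_lt_of_le hx.2 with h | h
    · have hfl : ⌊x⌋₊ = n + 1 := by
        rw [h]; rw [show ((n:ℝ≥0)+1) = ((n+1 : ℕ) : ℝ≥0) by push_cast; ring]
        exact Nat.floor_natCast _
      have hsub : x - ((n:ℝ≥0)+1) = 0 := by rw [h]; simp
      have h1 : g x = F^[n+1] x := by
        simp only [hgdef, hPdef, hfl]
        push_cast
        rw [hsub, zero_mul, add_zero]
      have h2 : P n x = F^[n+1] x := by
        simp only [hPdef]
        rw [h, add_tsub_cancel_left, one_mul, add_tsub_cancel_of_le (hAB n _)]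
      rw [h1, h2]
    · have hfl : ⌊x⌋₊ = n := by
        rw [Nat.floor_eq_iff (zero_le : 0 ≤ x)]; exact ⟨hx.1, h⟩
      simp only [hgdef, hfl]
  -- monotone
  have hgm : Monotone g := by
    intro x y hxy
    have hnm : ⌊x⌋₊ ≤ ⌊y⌋₊ := Nat.floor_mono hxy
    rcases eq_or_lt_of_le hnm with h | h
    · simp only [hgdef, hPdef, ← h]
      exact key_interp _ _ _ _ _ _ ((hFnm _) hxy) ((hFnm _) hxy) (hAB _ x) (hAB _ y)
        (tsub_le_tsub_right hxy _) (by
          rw [h]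
          exact tsub_le_iff_right.2 (by rw [add_comm]; exact (Nat.lt_floor_add_one y).le))
    · calc g x ≤ F^[⌊x⌋₊+1] x := hghigh x
      _ ≤ F^[⌊y⌋₊] x := hiter x h
      _ ≤ F^[⌊y⌋₊] y := (hFnm _) hxy
      _ ≤ g y := hglow y
  -- continuous
  have hgc : Continuous g := by
    rw [continuous_iff_continuousAt]
    intro x
    rcases lt_or_eq_of_le (Nat.floor_le (zero_le : 0 ≤ x) : ((⌊x⌋₊:ℕ):ℝ≥0) ≤ x) with hx | hx
    · -- x strictly above its floor: locally equal to P n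
      have hnb : Ioo ((⌊x⌋₊:ℕ):ℝ≥0) (((⌊x⌋₊:ℕ):ℝ≥0)+1) ∈ 𝓝 x :=
        isOpen_Ioo.mem_nhds ⟨hx, Nat.lt_floor_add_one x⟩
      refine (hPc ⌊x⌋₊).continuousAt.congr ?_
      filter_upwards [hnb] with y hy
      exact (hEq ⌊x⌋₊ y (Ioo_subset_Icc_self hy)).symm
    · -- x = n
      rcases Nat.eq_zero_or_pos ⌊x⌋₊ with h0 | hpos
      · have hx0 : x = 0 := by rw [← hx, h0]; simp
        have hnb : Iio ((1:ℝ≥0)) ∈ 𝓝 x := isOpen_Iio.mem_nhds (by rw [hx0]; norm_num)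
        refine (hPc 0).continuousAt.congr ?_
        filter_upwards [hnb] with y hy
        exact (hEq 0 y ⟨by simp, by simpa using hy.le⟩).symm
      · obtain ⟨k, hk⟩ : ∃ k, ⌊x⌋₊ = k + 1 := ⟨⌊x⌋₊ - 1, (Nat.succ_pred_eq_of_pos hpos).symm⟩
        have hxk : x = (k:ℝ≥0) + 1 := by rw [← hx, hk]; push_cast; ring
        have hm1 : x ∈ Icc (k:ℝ≥0) ((k:ℝ≥0)+1) := ⟨by rw [hxk]; exact le_self_add, hxk.le⟩
        have hm2 : x ∈ Icc ((k:ℝ≥0)+1) (((k:ℝ≥0)+1)+1) := ⟨hxk.ge, by rw [hxk]; exact le_self_add⟩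
        have cw1 : ContinuousWithinAt g (Icc (k:ℝ≥0) ((k:ℝ≥0)+1)) x :=
          ((hPc k).continuousWithinAt).congr (fun y hy => hEq k y hy) (hEq k x hm1)
        have cw2 : ContinuousWithinAt g (Icc ((k:ℝ≥0)+1) (((k:ℝ≥0)+1)+1)) x := by
          refine ((hPc (k+1)).continuousWithinAt).congr (fun y hy => ?_) ?_
          · exact hEq (k+1) y (by push_cast; push_cast at hy; exact hy)
          · exact hEq (k+1) x (by push_cast; push_cast at hm2; exact hm2)
        refine (cw1.union cw2).continuousAt (mem_of_superset
          (isOpen_Ioo.mem_nhds (show x ∈ Ioo (k:ℝ≥0) (((k:ℝ≥0)+1)+1) from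
            ⟨by rw [hxk]; exact lt_add_one _, by rw [hxk]; exact lt_add_one _⟩)) ?_)
        intro y hy
        rcases le_total y ((k:ℝ≥0)+1) with h | h
        · exact Or.inl ⟨hy.1.le, h⟩
        · exact Or.inr ⟨h, hy.2.le⟩
  refine ⟨g, ⟨hgc, hgm, Eventually.of_forall hgx,
    tendsto_atTop_mono hgx tendsto_id⟩, ?_⟩
  intro n
  filter_upwards [eventually_ge_atTop ((n:ℝ≥0)+1)] with x hx
  have hfl : n + 1 ≤ ⌊x⌋₊ := Nat.le_floor (by push_cast; exact hx)
  calc f^[n] x < F^[n+1] x := hdom n x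
  _ ≤ F^[⌊x⌋₊] x := hiter x hfl
  _ ≤ g x := hglow x
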